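/- arXiv:2511.09792 — 2 statements merged into one kernel-verified Lean document; each statement's English description precedes it below -/
import Mathlib

section
/- (Smooth-to-limit gradient convergence; Clarke-free form of Lemma 1.) Consider N agents with finite nonempty action sets A_i, joint action set A = ∏ A_i, payoff y : A → ℝ, and joint value Q_tot : A × ℝ^d → ℝ with q ↦ Q_tot(a;q) continuously differentiable for each a, where the parameter q ∈ ℝ^d consists exactly of the local value coordinates q_{i,b}. Let L_τ(q) = Σ_{a∈A} μ_τ(a|q)(y(a) − Q_tot(a;q))² be the softmax-weighted loss. If at the point q each agent's local values have a strict maximizer, so that the greedy joint action g is constant near q and the greedy loss L_0(q') = (y(g(q')) − Q_tot(g(q');q'))² is differentiable near q, then for every sequence of temperatures τ_k ↓ 0 one has lim_{k→∞} ∇_q L_{τ_k}(q) = ∇_q L_0(q). -/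
open Filter Real Finset Topology
open scoped Classical

/-- Softmax policy with temperature `τ` on a finite action set `A`. -/
noncomputable def softmax {A : Type*} [Fintype A] (τ : ℝ) (q : A → ℝ) (a : A) : ℝ :=
  Real.exp (q a / τ) / ∑ b : A, Real.exp (q b / τ)

/-- A choice of maximizer of a real-valued function on a finite nonempty type. -/
noncomputable def argmaxOf {B : Type*} [Finite B] [Nonempty B] (f : B → ℝ) : B :=
  (Finite.exists_max f).choose

section Helpers

variable {B : Type*} [Fintype B] [Nonempty B]

lemma sum_exp_pos (τ : ℝ) (x : B → ℝ) : 0 < ∑ b : B, Real.exp (x b / τ) :=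
  Finset.sum_pos (fun _ _ => Real.exp_pos _) Finset.univ_nonempty

lemma softmax_nonneg (τ : ℝ) (x : B → ℝ) (b : B) : 0 ≤ softmax τ x b :=
  div_nonneg (Real.exp_pos _).le (sum_exp_pos τ x).le

lemma softmax_le_one (τ : ℝ) (x : B → ℝ) (b : B) : softmax τ x b ≤ 1 :=
  (div_le_one (sum_exp_pos τ x)).mpr
    (Finset.single_le_sum (f := fun c => Real.exp (x c / τ))
      (fun _ _ => (Real.exp_pos _).le) (Finset.mem_univ b))

lemma sum_softmax (τ : ℝ) (x : B → ℝ) : ∑ b : B, softmax τ x b = 1 := by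
  unfold softmax
  rw [← Finset.sum_div]
  exact div_self (sum_exp_pos τ x).ne'

lemma softmax_le_exp (τ : ℝ) (x : B → ℝ) (b g : B) :
    softmax τ x b ≤ Real.exp ((x b - x g) / τ) := by
  have h1 : Real.exp (x g / τ) ≤ ∑ c : B, Real.exp (x c / τ) :=
    Finset.single_le_sum (f := fun c => Real.exp (x c / τ))
      (fun _ _ => (Real.exp_pos _).le) (Finset.mem_univ g)
  have := div_le_div_of_nonneg_left (Real.exp_pos (x b / τ)).le (Real.exp_pos (x g / τ)) h1
  calc softmax τ x b ≤ Real.exp (x b / τ) / Real.exp (x g / τ) := this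
    _ = Real.exp ((x b - x g) / τ) := by rw [sub_div, Real.exp_sub]

lemma one_sub_softmax (τ : ℝ) (x : B → ℝ) (g : B) :
    1 - softmax τ x g = ∑ b ∈ Finset.univ.erase g, softmax τ x b := by
  have := Finset.sum_erase_add Finset.univ (softmax τ x) (Finset.mem_univ g)
  rw [sum_softmax] at this
  linarith

lemma argmaxOf_eq {f : B → ℝ} {g : B} (h : ∀ b ≠ g, f b < f g) : argmaxOf f = g := by
  by_contra hne
  have hspec := (Finite.exists_max f).choose_spec g
  exact absurd hspec (not_le.mpr (h _ hne))

variable {τseq : ℕ → ℝ}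

lemma inv_tendsto (hpos : ∀ k, 0 < τseq k) (hlim : Tendsto τseq atTop (nhds 0)) :
    Tendsto (fun k => (τseq k)⁻¹) atTop atTop := by
  apply Filter.Tendsto.inv_tendsto_nhdsGT_zero
  rw [tendsto_nhdsWithin_iff]
  exact ⟨hlim, Filter.Eventually.of_forall fun k => hpos k⟩

lemma exp_div_tendsto (hpos : ∀ k, 0 < τseq k) (hlim : Tendsto τseq atTop (nhds 0))
    {δ : ℝ} (hδ : δ < 0) :
    Tendsto (fun k => Real.exp (δ / τseq k)) atTop (nhds 0) := by
  have h1 : Tendsto (fun k => δ / τseq k) atTop atBot := by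
    simp only [div_eq_mul_inv]
    exact (tendsto_const_mul_atBot_of_neg hδ).mpr (inv_tendsto hpos hlim)
  exact Real.tendsto_exp_atBot.comp h1

lemma exp_div_div_tendsto (hpos : ∀ k, 0 < τseq k) (hlim : Tendsto τseq atTop (nhds 0))
    {δ : ℝ} (hδ : δ < 0) :
    Tendsto (fun k => Real.exp (δ / τseq k) / τseq k) atTop (nhds 0) := by
  have hδ' : 0 < -δ := neg_pos.mpr hδ
  have hu := inv_tendsto hpos hlim
  have h1 : Tendsto (fun k => (-δ) * (τseq k)⁻¹) atTop atTop :=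
    Filter.Tendsto.const_mul_atTop hδ' hu
  have h2 := (tendsto_pow_mul_exp_neg_atTop_nhds_zero 1).comp h1
  have h3 : Tendsto (fun k => (-δ)⁻¹ * (((-δ) * (τseq k)⁻¹) ^ 1 *
      Real.exp (-((-δ) * (τseq k)⁻¹)))) atTop (nhds 0) := by
    simpa using h2.const_mul (-δ)⁻¹
  refine h3.congr fun k => ?_
  have hτ : τseq k ≠ 0 := (hpos k).ne'
  have hδ0 : (-δ) ≠ 0 := hδ'.ne'
  rw [div_eq_mul_inv (Real.exp _), mul_comm (Real.exp _)]
  rw [pow_one, ← mul_assoc, ← mul_assoc, inv_mul_cancel₀ hδ0, one_mul]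
  congr 1
  rw [neg_mul, neg_neg, ← div_eq_mul_inv δ (τseq k)]

lemma softmax_tendsto (hpos : ∀ k, 0 < τseq k) (hlim : Tendsto τseq atTop (nhds 0))
    (x : B → ℝ) (g : B) (hmax : ∀ b ≠ g, x b < x g) (b : B) :
    Tendsto (fun k => softmax (τseq k) x b) atTop
      (nhds (if b = g then (1 : ℝ) else 0)) := by
  have hrw : ∀ k, softmax (τseq k) x b =
      Real.exp ((x b - x g) / τseq k) / ∑ c : B, Real.exp ((x c - x g) / τseq k) := by
    intro k
    unfold softmax
    simp only [sub_div, Real.exp_sub, ← Finset.sum_div]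
    rw [div_div_div_cancel_right₀]
    exact Real.exp_ne_zero _
  have hnum : ∀ c : B, Tendsto (fun k => Real.exp ((x c - x g) / τseq k)) atTop
      (nhds (if c = g then (1 : ℝ) else 0)) := by
    intro c
    by_cases hc : c = g
    · simp only [hc, sub_self, zero_div, Real.exp_zero, if_pos rfl]
      exact tendsto_const_nhds
    · simpa [hc] using exp_div_tendsto hpos hlim (sub_neg.mpr (hmax c hc))
  have hden : Tendsto (fun k => ∑ c : B, Real.exp ((x c - x g) / τseq k)) atTop
      (nhds 1) := by
    have := tendsto_finset_sum Finset.univ (fun c (_ : c ∈ Finset.univ) => hnum c)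
    simpa using this
  have := (hnum b).div hden one_ne_zero
  simp only [div_one] at this
  exact (this.congr fun k => (hrw k).symm)

lemma coeff_abs_le (τ : ℝ) (x : B → ℝ) (g b c : B) :
    |softmax τ x b * ((if c = b then (1 : ℝ) else 0) - softmax τ x c)| ≤
      ∑ c' ∈ Finset.univ.erase g, Real.exp ((x c' - x g) / τ) := by
  set S := ∑ c' ∈ Finset.univ.erase g, Real.exp ((x c' - x g) / τ) with hS
  have hterm : ∀ c' : B, c' ≠ g → softmax τ x c' ≤ S := by
    intro c' hc'
    calc softmax τ x c' ≤ Real.exp ((x c' - x g) / τ) := softmax_le_exp τ x c' g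
      _ ≤ S := Finset.single_le_sum (f := fun c' => Real.exp ((x c' - x g) / τ))
          (fun _ _ => (Real.exp_pos _).le)
          (Finset.mem_erase.mpr ⟨hc', Finset.mem_univ _⟩)
  by_cases hb : b = g
  · by_cases hc : c = b
    · rw [if_pos hc, hc, hb]
      rw [abs_of_nonneg (mul_nonneg (softmax_nonneg _ _ _)
        (sub_nonneg.mpr (softmax_le_one _ _ _)))]
      calc softmax τ x g * (1 - softmax τ x g) ≤ 1 * (1 - softmax τ x g) :=
            mul_le_mul_of_nonneg_right (softmax_le_one _ _ _)
              (sub_nonneg.mpr (softmax_le_one _ _ _))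
        _ = ∑ b' ∈ Finset.univ.erase g, softmax τ x b' := by
            rw [one_mul, one_sub_softmax]
        _ ≤ S := Finset.sum_le_sum fun b' _ => softmax_le_exp τ x b' g
    · rw [if_neg hc, zero_sub, mul_neg, abs_neg,
        abs_of_nonneg (mul_nonneg (softmax_nonneg _ _ _) (softmax_nonneg _ _ _))]
      calc softmax τ x b * softmax τ x c ≤ 1 * softmax τ x c :=
            mul_le_mul_of_nonneg_right (softmax_le_one _ _ _) (softmax_nonneg _ _ _)
        _ = softmax τ x c := one_mul _
        _ ≤ S := hterm c (fun h => hc (h.trans hb.symm))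
  · have h1 : |(if c = b then (1 : ℝ) else 0) - softmax τ x c| ≤ 1 := by
      by_cases hc : c = b
      · rw [if_pos hc]
        rw [abs_of_nonneg (sub_nonneg.mpr (softmax_le_one _ _ _))]
        linarith [softmax_nonneg τ x c]
      · rw [if_neg hc, zero_sub, abs_neg, abs_of_nonneg (softmax_nonneg _ _ _)]
        exact softmax_le_one _ _ _
    calc |softmax τ x b * ((if c = b then (1 : ℝ) else 0) - softmax τ x c)|
        = softmax τ x b * |(if c = b then (1 : ℝ) else 0) - softmax τ x c| := by
          rw [abs_mul, abs_of_nonneg (softmax_nonneg _ _ _)]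
      _ ≤ softmax τ x b * 1 := mul_le_mul_of_nonneg_left h1 (softmax_nonneg _ _ _)
      _ = softmax τ x b := mul_one _
      _ ≤ S := hterm b hb

end Helpers

set_option maxHeartbeats 1000000

/-- smooth-to-limit gradient convergence; Clarke-free form of Lemma 1:
with parameter vector consisting exactly of the local value coordinates `q (i, b)`, if at
`q` each agent's local values have a strict maximizer (so the greedy joint action is
constant near `q` and the greedy loss `L_0` is differentiable near `q`), then for every
sequence of temperatures `τ_k ↓ 0`, `∇L_{τ_k}(q) → ∇L_0(q)`. -/
theorem grad_surrogateLoss_tendsto_grad_greedyLoss {N : ℕ} {A : Fin N → Type*}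
    [∀ i, Fintype (A i)] [∀ i, Nonempty (A i)]
    (y : (∀ i, A i) → ℝ)
    (Qtot : (∀ i, A i) → ((Σ i, A i) → ℝ) → ℝ)
    (hQ : ∀ a, ContDiff ℝ 1 (Qtot a))
    (q : (Σ i, A i) → ℝ) (g : ∀ i, A i)
    (hg : ∀ i, ∀ b ≠ g i, q ⟨i, b⟩ < q ⟨i, g i⟩)
    (L0 : ((Σ i, A i) → ℝ) → ℝ)
    (hL0 : ∀ q', L0 q' =
      (y (fun i => argmaxOf (fun b => q' ⟨i, b⟩)) -
        Qtot (fun i => argmaxOf (fun b => q' ⟨i, b⟩)) q') ^ 2)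
    (τseq : ℕ → ℝ) (hpos : ∀ k, 0 < τseq k) (hanti : StrictAnti τseq)
    (hlim : Filter.Tendsto τseq Filter.atTop (nhds 0)) :
    Filter.Tendsto
      (fun k => fderiv ℝ
        (fun q' : (Σ i, A i) → ℝ => ∑ a : ∀ i, A i,
          (∏ i, softmax (τseq k) (fun b => q' ⟨i, b⟩) (a i)) * (y a - Qtot a q') ^ 2) q)
      Filter.atTop (nhds (fderiv ℝ L0 q)) := by
  -- the eventual greedy action near q
  have hev : ∀ᶠ q' in 𝓝 q, ∀ s : Σ i, A i, s.2 ≠ g s.1 → q' s < q' ⟨s.1, g s.1⟩ := by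
    rw [Filter.eventually_all]
    intro s
    by_cases hs : s.2 ≠ g s.1
    · have hc1 : ContinuousAt (fun q' : (Σ i, A i) → ℝ => q' s) q :=
        (continuous_apply s).continuousAt
      have hc2 : ContinuousAt (fun q' : (Σ i, A i) → ℝ => q' ⟨s.1, g s.1⟩) q :=
        (continuous_apply (⟨s.1, g s.1⟩ : Σ i, A i)).continuousAt
      have hlt : q s < q ⟨s.1, g s.1⟩ := by
        obtain ⟨i, b⟩ := s
        exact hg i b hs
      exact (hc1.eventually_lt hc2 hlt).mono fun q' h _ => h
    · exact Filter.Eventually.of_forall fun q' h => absurd h hs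
  have hL0eq : fderiv ℝ L0 q = fderiv ℝ (fun q' => (y g - Qtot g q') ^ 2) q := by
    apply Filter.EventuallyEq.fderiv_eq
    refine hev.mono fun q' hq' => ?_
    rw [hL0 q']
    have harg : (fun i => argmaxOf (fun b => q' ⟨i, b⟩)) = g := by
      funext i
      exact argmaxOf_eq (fun b hb => hq' ⟨i, b⟩ hb)
    rw [harg]
  -- derivative of the squared residual
  have hdiffh : ∀ a : ∀ i, A i,
      DifferentiableAt ℝ (fun q' : (Σ i, A i) → ℝ => (y a - Qtot a q') ^ 2) q :=
    fun a => (((hQ a).differentiable one_ne_zero q).const_sub (y a)).pow 2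
  have hh : ∀ a : ∀ i, A i,
      HasFDerivAt (fun q' : (Σ i, A i) → ℝ => (y a - Qtot a q') ^ 2)
        (fderiv ℝ (fun q' : (Σ i, A i) → ℝ => (y a - Qtot a q') ^ 2) q) q :=
    fun a => (hdiffh a).hasFDerivAt
  -- derivative of the softmax factors
  have hφ : ∀ (k : ℕ) (i : Fin N) (b : A i),
      HasFDerivAt (fun q' : (Σ i, A i) → ℝ => softmax (τseq k) (fun c => q' ⟨i, c⟩) b)
        (∑ c : A i,
          (softmax (τseq k) (fun c' => q ⟨i, c'⟩) b *
            ((if c = b then (1 : ℝ) else 0) - softmax (τseq k) (fun c' => q ⟨i, c'⟩) c)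
            / τseq k) •
          ContinuousLinearMap.proj (R := ℝ) (φ := fun _ : Σ i, A i => ℝ) ⟨i, c⟩) q := by
    intro k i b
    have hτ0 : τseq k ≠ 0 := (hpos k).ne'
    have hden : (0 : ℝ) < ∑ c : A i, Real.exp (q ⟨i, c⟩ / τseq k) :=
      Finset.sum_pos (fun _ _ => Real.exp_pos _) Finset.univ_nonempty
    have hproj : ∀ c : A i, HasFDerivAt (fun q' : (Σ i, A i) → ℝ => q' ⟨i, c⟩)
        (ContinuousLinearMap.proj (R := ℝ) (φ := fun _ : Σ i, A i => ℝ) ⟨i, c⟩) q :=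
      fun c => hasFDerivAt_apply (⟨i, c⟩ : Σ i, A i) q
    have hnum : ∀ c : A i,
        HasFDerivAt (fun q' : (Σ i, A i) → ℝ => Real.exp (q' ⟨i, c⟩ / τseq k))
          (Real.exp (q ⟨i, c⟩ / τseq k) • ((τseq k)⁻¹ •
            ContinuousLinearMap.proj (R := ℝ) (φ := fun _ : Σ i, A i => ℝ) ⟨i, c⟩)) q := by
      intro c
      have h1 : HasFDerivAt (fun q' : (Σ i, A i) → ℝ => q' ⟨i, c⟩ / τseq k)
          ((τseq k)⁻¹ •
            ContinuousLinearMap.proj (R := ℝ) (φ := fun _ : Σ i, A i => ℝ) ⟨i, c⟩) q := by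
        simp only [div_eq_inv_mul]
        exact (hproj c).const_mul (τseq k)⁻¹
      exact h1.exp
    have hsum : HasFDerivAt (fun q' : (Σ i, A i) → ℝ => ∑ c : A i, Real.exp (q' ⟨i, c⟩ / τseq k))
        (∑ c : A i, Real.exp (q ⟨i, c⟩ / τseq k) • ((τseq k)⁻¹ •
          ContinuousLinearMap.proj (R := ℝ) (φ := fun _ : Σ i, A i => ℝ) ⟨i, c⟩)) q :=
      HasFDerivAt.fun_sum fun c _ => hnum c
    have hinv : HasFDerivAt
        (fun q' : (Σ i, A i) → ℝ => (∑ c : A i, Real.exp (q' ⟨i, c⟩ / τseq k))⁻¹)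
        (-(((∑ c : A i, Real.exp (q ⟨i, c⟩ / τseq k)) ^ 2)⁻¹ •
          ∑ c : A i, Real.exp (q ⟨i, c⟩ / τseq k) • ((τseq k)⁻¹ •
            ContinuousLinearMap.proj (R := ℝ) (φ := fun _ : Σ i, A i => ℝ) ⟨i, c⟩))) q := by
      have := (hasDerivAt_inv hden.ne').comp_hasFDerivAt q hsum
      simpa [Function.comp_def] using this
    have hmul := (hnum b).fun_mul hinv
    have hfun : (fun q' : (Σ i, A i) → ℝ => softmax (τseq k) (fun c => q' ⟨i, c⟩) b)
        = fun q' : (Σ i, A i) → ℝ =>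
            Real.exp (q' ⟨i, b⟩ / τseq k) * (∑ c : A i, Real.exp (q' ⟨i, c⟩ / τseq k))⁻¹ := by
      funext q'
      rw [softmax, div_eq_mul_inv]
    rw [hfun]
    refine hmul.congr_fderiv (Eq.symm ?_)
    ext v
    simp only [ContinuousLinearMap.coe_sum', Finset.sum_apply, ContinuousLinearMap.coe_smul',
      Pi.smul_apply, ContinuousLinearMap.proj_apply, smul_eq_mul, ContinuousLinearMap.add_apply,
      softmax]
    have hD0 : (∑ x : A i, Real.exp (q ⟨i, x⟩ / τseq k)) ≠ 0 := hden.ne'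
    have hsplit : ∀ c ∈ (Finset.univ : Finset (A i)),
        (Real.exp (q ⟨i, b⟩ / τseq k) / ∑ x : A i, Real.exp (q ⟨i, x⟩ / τseq k)) *
            ((if c = b then (1 : ℝ) else 0) -
              Real.exp (q ⟨i, c⟩ / τseq k) / ∑ x : A i, Real.exp (q ⟨i, x⟩ / τseq k)) /
            τseq k * v ⟨i, c⟩
          = Real.exp (q ⟨i, b⟩ / τseq k) *
              -(((∑ x : A i, Real.exp (q ⟨i, x⟩ / τseq k)) ^ 2)⁻¹ *
                (Real.exp (q ⟨i, c⟩ / τseq k) * ((τseq k)⁻¹ * v ⟨i, c⟩))) +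
            (if c = b then (∑ x : A i, Real.exp (q ⟨i, x⟩ / τseq k))⁻¹ *
              (Real.exp (q ⟨i, b⟩ / τseq k) * ((τseq k)⁻¹ * v ⟨i, c⟩)) else 0) := by
      intro c _
      by_cases hc : c = b
      · subst hc
        rw [if_pos rfl, if_pos rfl]
        simp only [div_eq_mul_inv, mul_inv, pow_two]
        ring
      · rw [if_neg hc, if_neg hc, add_zero]
        simp only [div_eq_mul_inv, mul_inv, pow_two]
        ring
    rw [Finset.sum_congr rfl hsplit, Finset.sum_add_distrib,
      Finset.sum_ite_eq' Finset.univ b, ← Finset.mul_sum, Finset.sum_neg_distrib,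
      ← Finset.mul_sum]
    simp [Finset.mem_univ]
  -- derivative of the product of softmax factors
  have hP : ∀ (k : ℕ) (a : ∀ i, A i),
      HasFDerivAt (fun q' : (Σ i, A i) → ℝ => ∏ i, softmax (τseq k) (fun b => q' ⟨i, b⟩) (a i))
        (∑ i : Fin N,
          (∏ j ∈ Finset.univ.erase i, softmax (τseq k) (fun b => q ⟨j, b⟩) (a j)) •
          (∑ c : A i,
            (softmax (τseq k) (fun c' => q ⟨i, c'⟩) (a i) *
              ((if c = a i then (1 : ℝ) else 0) - softmax (τseq k) (fun c' => q ⟨i, c'⟩) c)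
              / τseq k) •
            ContinuousLinearMap.proj (R := ℝ) (φ := fun _ : Σ i, A i => ℝ) ⟨i, c⟩)) q :=
    fun k a => HasFDerivAt.finset_prod (fun i _ => hφ k i (a i))
  have hF : ∀ k : ℕ, HasFDerivAt
      (fun q' : (Σ i, A i) → ℝ => ∑ a : ∀ i, A i,
        (∏ i, softmax (τseq k) (fun b => q' ⟨i, b⟩) (a i)) * (y a - Qtot a q') ^ 2)
      (∑ a : ∀ i, A i,
        ((∏ i, softmax (τseq k) (fun b => q ⟨i, b⟩) (a i)) •
            fderiv ℝ (fun q' : (Σ i, A i) → ℝ => (y a - Qtot a q') ^ 2) q +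
          (y a - Qtot a q) ^ 2 •
            ∑ i : Fin N,
              (∏ j ∈ Finset.univ.erase i, softmax (τseq k) (fun b => q ⟨j, b⟩) (a j)) •
              (∑ c : A i,
                (softmax (τseq k) (fun c' => q ⟨i, c'⟩) (a i) *
                  ((if c = a i then (1 : ℝ) else 0) -
                    softmax (τseq k) (fun c' => q ⟨i, c'⟩) c) / τseq k) •
                ContinuousLinearMap.proj (R := ℝ) (φ := fun _ : Σ i, A i => ℝ) ⟨i, c⟩))) q :=
    fun k => HasFDerivAt.fun_sum fun a _ => (hP k a).mul (hh a)
  -- scalar limits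
  have hπlim : ∀ (i : Fin N) (b : A i),
      Tendsto (fun k => softmax (τseq k) (fun c => q ⟨i, c⟩) b) atTop
        (𝓝 (if b = g i then (1 : ℝ) else 0)) :=
    fun i b => softmax_tendsto hpos hlim (fun c => q ⟨i, c⟩) (g i) (fun c hc => hg i c hc) b
  have hcoefflim : ∀ (i : Fin N) (b c : A i),
      Tendsto (fun k => softmax (τseq k) (fun c' => q ⟨i, c'⟩) b *
        ((if c = b then (1 : ℝ) else 0) - softmax (τseq k) (fun c' => q ⟨i, c'⟩) c) / τseq k)
        atTop (𝓝 0) := by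
    intro i b c
    apply squeeze_zero_norm (a := fun k =>
      (∑ c' ∈ Finset.univ.erase (g i), Real.exp ((q ⟨i, c'⟩ - q ⟨i, g i⟩) / τseq k)) / τseq k)
    · intro k
      rw [Real.norm_eq_abs, abs_div, abs_of_pos (hpos k)]
      exact (div_le_div_iff_of_pos_right (hpos k)).mpr
        (coeff_abs_le (τseq k) (fun c' => q ⟨i, c'⟩) (g i) b c)
    · have h1 := tendsto_finset_sum (Finset.univ.erase (g i)) (fun c' hc' =>
        exp_div_div_tendsto hpos hlim (sub_neg.mpr (hg i c' (Finset.ne_of_mem_erase hc'))))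
      simp only [Finset.sum_const_zero] at h1
      refine h1.congr fun k => ?_
      rw [Finset.sum_div]
  -- limit of the softmax-gradient CLMs
  have hDφlim : ∀ (i : Fin N) (b : A i),
      Tendsto (fun k => ∑ c : A i,
        (softmax (τseq k) (fun c' => q ⟨i, c'⟩) b *
          ((if c = b then (1 : ℝ) else 0) - softmax (τseq k) (fun c' => q ⟨i, c'⟩) c)
          / τseq k) •
        ContinuousLinearMap.proj (R := ℝ) (φ := fun _ : Σ i, A i => ℝ) ⟨i, c⟩) atTop
        (𝓝 0) := by
    intro i b
    have h1 := tendsto_finset_sum (Finset.univ : Finset (A i)) (fun c _ =>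
      (hcoefflim i b c).smul_const
        (ContinuousLinearMap.proj (R := ℝ) (φ := fun _ : Σ i, A i => ℝ) ⟨i, c⟩))
    simpa using h1
  have hDPlim : ∀ a : ∀ i, A i,
      Tendsto (fun k => ∑ i : Fin N,
        (∏ j ∈ Finset.univ.erase i, softmax (τseq k) (fun b => q ⟨j, b⟩) (a j)) •
        (∑ c : A i,
          (softmax (τseq k) (fun c' => q ⟨i, c'⟩) (a i) *
            ((if c = a i then (1 : ℝ) else 0) - softmax (τseq k) (fun c' => q ⟨i, c'⟩) c)
            / τseq k) •
          ContinuousLinearMap.proj (R := ℝ) (φ := fun _ : Σ i, A i => ℝ) ⟨i, c⟩)) atTop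
        (𝓝 0) := by
    intro a
    have h1 := tendsto_finset_sum (Finset.univ : Finset (Fin N)) (fun i _ =>
      Filter.Tendsto.smul
        (tendsto_finset_prod (Finset.univ.erase i) (fun j _ => hπlim j (a j)))
        (hDφlim i (a i)))
    simpa using h1
  have hPlim : ∀ a : ∀ i, A i,
      Tendsto (fun k => ∏ i, softmax (τseq k) (fun b => q ⟨i, b⟩) (a i)) atTop
        (𝓝 (∏ i, if a i = g i then (1 : ℝ) else 0)) :=
    fun a => tendsto_finset_prod Finset.univ (fun i _ => hπlim i (a i))
  have hbig := tendsto_finset_sum (Finset.univ : Finset (∀ i, A i)) (fun a _ =>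
    Filter.Tendsto.add
      ((hPlim a).smul_const
        (fderiv ℝ (fun q' : (Σ i, A i) → ℝ => (y a - Qtot a q') ^ 2) q))
      ((hDPlim a).const_smul ((y a - Qtot a q) ^ 2)))
  have hfin : (∑ a : ∀ i, A i,
      ((∏ i, if a i = g i then (1 : ℝ) else 0) •
          fderiv ℝ (fun q' : (Σ i, A i) → ℝ => (y a - Qtot a q') ^ 2) q +
        (y a - Qtot a q) ^ 2 • (0 : ((Σ i, A i) → ℝ) →L[ℝ] ℝ)))
      = fderiv ℝ (fun q' : (Σ i, A i) → ℝ => (y g - Qtot g q') ^ 2) q := by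
    rw [Finset.sum_eq_single_of_mem g (Finset.mem_univ g) ?side]
    · simp
    case side =>
      intro a _ hne
      obtain ⟨i, hi⟩ := Function.ne_iff.mp hne
      have hz : (∏ i, if a i = g i then (1 : ℝ) else 0) = 0 :=
        Finset.prod_eq_zero (Finset.mem_univ i) (by rw [if_neg hi])
      rw [hz]
      simp
  refine Filter.Tendsto.congr (fun k => ((hF k).fderiv).symm) ?_
  rw [hL0eq, ← hfin]
  exact hbig
end

section
/- (Uniform Lipschitz-type bound used in Lemma 1.) Consider N agents with finite nonempty action sets A_i, payoff y : A → ℝ on A = ∏ A_i, and joint value Q_tot : A × ℝ^d → ℝ with q ↦ Q_tot(a;q) continuously differentiable for each a, where q ∈ ℝ^d consists of the local value coordinates q_{i,b}. Let K ⊆ ℝ^d be a compact set and δ > 0 be such that for every q ∈ K and every agent i, q_i has a strict maximizer with gap at least δ (i.e. q_{i,g_i(q)} − q_{i,b} ≥ δ for all b ≠ g_i(q)). Then the gradients of the softmax-weighted losses are uniformly bounded on K over small temperatures: sup_{τ ∈ (0,1]} sup_{q ∈ K} ‖∇_q L_τ(q)‖ < ∞. -/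
open ContinuousLinearMap in
lemma softmax_hasFDerivAt' {B : Type*} [Fintype B] (τ : ℝ) (v : B → ℝ) (b₀ : B) :
    HasFDerivAt (fun w => softmax τ w b₀)
      ((Real.exp (v b₀ / τ) •
          ((-((∑ b : B, Real.exp (v b / τ)) ^ 2)⁻¹) •
            (∑ b : B, Real.exp (v b / τ) • (τ⁻¹ • (proj b : (B → ℝ) →L[ℝ] ℝ)))))
        + ((∑ b : B, Real.exp (v b / τ))⁻¹ •
            (Real.exp (v b₀ / τ) • (τ⁻¹ • (proj b₀ : (B → ℝ) →L[ℝ] ℝ))))) v := by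
  have hspos : 0 < ∑ b : B, Real.exp (v b / τ) := by
    have : Nonempty B := ⟨b₀⟩
    exact Finset.sum_pos (fun b _ => Real.exp_pos _) Finset.univ_nonempty
  have hlin : ∀ b : B, HasFDerivAt (fun w : B → ℝ => w b / τ)
      (τ⁻¹ • (proj b : (B → ℝ) →L[ℝ] ℝ)) v := by
    intro b
    simp only [div_eq_inv_mul]
    exact ((proj b : (B → ℝ) →L[ℝ] ℝ).hasFDerivAt (x := v)).const_smul τ⁻¹
  have hexp : ∀ b : B, HasFDerivAt (fun w : B → ℝ => Real.exp (w b / τ))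
      (Real.exp (v b / τ) • (τ⁻¹ • (proj b : (B → ℝ) →L[ℝ] ℝ))) v := fun b =>
    (hlin b).exp
  have hsum : HasFDerivAt (fun w : B → ℝ => ∑ b : B, Real.exp (w b / τ))
      (∑ b : B, Real.exp (v b / τ) • (τ⁻¹ • (proj b : (B → ℝ) →L[ℝ] ℝ))) v :=
    HasFDerivAt.fun_sum (fun b _ => hexp b)
  have hinv : HasFDerivAt (fun w : B → ℝ => (∑ b : B, Real.exp (w b / τ))⁻¹)
      ((-((∑ b : B, Real.exp (v b / τ)) ^ 2)⁻¹) •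
        (∑ b : B, Real.exp (v b / τ) • (τ⁻¹ • (proj b : (B → ℝ) →L[ℝ] ℝ)))) v :=
    (hasDerivAt_inv hspos.ne').comp_hasFDerivAt v hsum
  have := (hexp b₀).mul hinv
  simp only [softmax, div_eq_mul_inv]
  exact this

lemma softmax_nonneg_s17 {A : Type*} [Fintype A] [Nonempty A] {τ : ℝ} (q : A → ℝ) (a : A) :
    0 ≤ softmax τ q a := by
  unfold softmax
  have : 0 < ∑ b : A, Real.exp (q b / τ) :=
    Finset.sum_pos (fun b _ => Real.exp_pos _) Finset.univ_nonempty
  positivity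

lemma softmax_le_one_s17 {A : Type*} [Fintype A] [Nonempty A] {τ : ℝ} (q : A → ℝ) (a : A) :
    softmax τ q a ≤ 1 := by
  unfold softmax
  have hpos : 0 < ∑ b : A, Real.exp (q b / τ) :=
    Finset.sum_pos (fun b _ => Real.exp_pos _) Finset.univ_nonempty
  rw [div_le_one hpos]
  exact Finset.single_le_sum (f := fun b => Real.exp (q b / τ))
    (fun b _ => (Real.exp_pos _).le) (Finset.mem_univ a)

section Helpers
variable {N : ℕ} {A : Fin N → Type*} [∀ i, Fintype (A i)] [∀ i, Nonempty (A i)]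

noncomputable def restrCLM (i : Fin N) : ((Σ j, A j) → ℝ) →L[ℝ] (A i → ℝ) :=
  ContinuousLinearMap.pi (fun b => ContinuousLinearMap.proj ⟨i, b⟩)

lemma restrCLM_norm_le (i : Fin N) : ‖(restrCLM (A := A) i)‖ ≤ 1 := by
  apply ContinuousLinearMap.opNorm_le_bound _ zero_le_one
  intro q
  rw [one_mul]
  apply pi_norm_le_iff_of_nonneg (norm_nonneg q) |>.mpr
  intro b
  exact norm_le_pi_norm q ⟨i, b⟩

end Helpers

open ContinuousLinearMap in
lemma softmax_deriv_norm_le {B : Type*} [Fintype B] {τ δ : ℝ} (hδ : 0 < δ)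
    (hτ0 : 0 < τ) (hτ1 : τ ≤ 1) (v : B → ℝ) (g : B) (hg : ∀ b ≠ g, v b + δ ≤ v g) (b₀ : B) :
    ‖(Real.exp (v b₀ / τ) •
          ((-((∑ b : B, Real.exp (v b / τ)) ^ 2)⁻¹) •
            (∑ b : B, Real.exp (v b / τ) • (τ⁻¹ • (proj b : (B → ℝ) →L[ℝ] ℝ)))))
        + ((∑ b : B, Real.exp (v b / τ))⁻¹ •
            (Real.exp (v b₀ / τ) • (τ⁻¹ • (proj b₀ : (B → ℝ) →L[ℝ] ℝ))))‖
      ≤ 2 * Fintype.card B / δ := by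
  have hspos : 0 < ∑ b : B, Real.exp (v b / τ) := by
    have : Nonempty B := ⟨b₀⟩
    exact Finset.sum_pos (fun b _ => Real.exp_pos _) Finset.univ_nonempty
  have hes : ∀ b : B, Real.exp (v b / τ) ≤ ∑ c : B, Real.exp (v c / τ) := fun b =>
    Finset.single_le_sum (f := fun c => Real.exp (v c / τ))
      (fun c _ => (Real.exp_pos _).le) (Finset.mem_univ b)
  have hkey : ∀ b : B, b ≠ b₀ →
      Real.exp (v b₀ / τ) * Real.exp (v b / τ) / (τ * (∑ c : B, Real.exp (v c / τ)) ^ 2)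
        ≤ 1 / δ := by
    intro b hb
    have hexpd : Real.exp (-(δ / τ)) ≤ τ / δ := by
      have h1 : δ / τ ≤ Real.exp (δ / τ) := by
        linarith [Real.add_one_le_exp (δ / τ)]
      have h2 : 0 < δ / τ := div_pos hδ hτ0
      calc Real.exp (-(δ / τ)) = (Real.exp (δ / τ))⁻¹ := Real.exp_neg _
        _ ≤ (δ / τ)⁻¹ := inv_anti₀ h2 h1
        _ = τ / δ := by rw [inv_div]
    have hsmall : ∀ c : B, c ≠ g →
        Real.exp (v c / τ) ≤ (τ / δ) * ∑ b : B, Real.exp (v b / τ) := by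
      intro c hc
      have h3 : v c / τ ≤ v g / τ - δ / τ := by
        rw [div_sub_div_same]
        gcongr
        linarith [hg c hc]
      calc Real.exp (v c / τ) ≤ Real.exp (v g / τ - δ / τ) := Real.exp_le_exp.mpr h3
        _ = Real.exp (-(δ/τ)) * Real.exp (v g / τ) := by
            rw [sub_eq_add_neg, Real.exp_add]; ring
        _ ≤ (τ / δ) * ∑ b : B, Real.exp (v b / τ) := by
            apply mul_le_mul hexpd (hes g) (Real.exp_pos _).le
            positivity
    have hprod : Real.exp (v b₀ / τ) * Real.exp (v b / τ)
        ≤ (τ/δ) * (∑ c : B, Real.exp (v c / τ)) * (∑ c : B, Real.exp (v c / τ)) := by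
      rcases eq_or_ne b₀ g with h | h
      · calc Real.exp (v b₀ / τ) * Real.exp (v b / τ)
            ≤ (∑ c : B, Real.exp (v c / τ)) * ((τ/δ) * ∑ c : B, Real.exp (v c / τ)) :=
              mul_le_mul (hes b₀) (hsmall b (h ▸ hb)) (Real.exp_pos _).le hspos.le
          _ = (τ/δ) * (∑ c : B, Real.exp (v c / τ)) * (∑ c : B, Real.exp (v c / τ)) := by ring
      · calc Real.exp (v b₀ / τ) * Real.exp (v b / τ)
            ≤ ((τ/δ) * ∑ c : B, Real.exp (v c / τ)) * (∑ c : B, Real.exp (v c / τ)) :=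
              mul_le_mul (hsmall b₀ h) (hes b) (Real.exp_pos _).le (by positivity)
          _ = (τ/δ) * (∑ c : B, Real.exp (v c / τ)) * (∑ c : B, Real.exp (v c / τ)) := by ring
    rw [div_le_div_iff₀ (by positivity) hδ]
    calc Real.exp (v b₀ / τ) * Real.exp (v b / τ) * δ
        ≤ (τ/δ) * (∑ c : B, Real.exp (v c / τ)) * (∑ c : B, Real.exp (v c / τ)) * δ :=
          mul_le_mul_of_nonneg_right hprod hδ.le
      _ = 1 * (τ * (∑ c : B, Real.exp (v c / τ)) ^ 2) := by field_simp
  apply ContinuousLinearMap.opNorm_le_bound _ (by positivity)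
  intro w
  have happ : ((Real.exp (v b₀ / τ) •
          ((-((∑ b : B, Real.exp (v b / τ)) ^ 2)⁻¹) •
            (∑ b : B, Real.exp (v b / τ) • (τ⁻¹ • (proj b : (B → ℝ) →L[ℝ] ℝ)))))
        + ((∑ b : B, Real.exp (v b / τ))⁻¹ •
            (Real.exp (v b₀ / τ) • (τ⁻¹ • (proj b₀ : (B → ℝ) →L[ℝ] ℝ))))) w
      = ∑ b : B, (Real.exp (v b₀ / τ) * Real.exp (v b / τ)
          / (τ * (∑ c : B, Real.exp (v c / τ)) ^ 2)) * (w b₀ - w b) := by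
    have hsum_apply : ((∑ b : B, Real.exp (v b / τ) • (τ⁻¹ • (proj b : (B → ℝ) →L[ℝ] ℝ)))) w
        = ∑ b : B, Real.exp (v b / τ) * (τ⁻¹ * w b) := by
      rw [ContinuousLinearMap.sum_apply]
      simp [smul_eq_mul]
    simp only [ContinuousLinearMap.add_apply, ContinuousLinearMap.smul_apply, hsum_apply,
      smul_eq_mul, proj_apply]
    have hexpand : ∑ b : B, (Real.exp (v b₀ / τ) * Real.exp (v b / τ)
          / (τ * (∑ c : B, Real.exp (v c / τ)) ^ 2)) * (w b₀ - w b)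
        = (Real.exp (v b₀ / τ) / (τ * (∑ c : B, Real.exp (v c / τ)) ^ 2)) *
            ((∑ b : B, Real.exp (v b / τ)) * w b₀ - ∑ b : B, Real.exp (v b / τ) * w b) := by
      calc ∑ b : B, (Real.exp (v b₀ / τ) * Real.exp (v b / τ)
          / (τ * (∑ c : B, Real.exp (v c / τ)) ^ 2)) * (w b₀ - w b)
          = ∑ b : B, (Real.exp (v b₀ / τ) / (τ * (∑ c : B, Real.exp (v c / τ)) ^ 2)) *
              (Real.exp (v b / τ) * w b₀ - Real.exp (v b / τ) * w b) :=
            Finset.sum_congr rfl fun b _ => by ring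
        _ = (Real.exp (v b₀ / τ) / (τ * (∑ c : B, Real.exp (v c / τ)) ^ 2)) *
              ∑ b : B, (Real.exp (v b / τ) * w b₀ - Real.exp (v b / τ) * w b) :=
            (Finset.mul_sum _ _ _).symm
        _ = _ := by rw [Finset.sum_sub_distrib, ← Finset.sum_mul]
    rw [hexpand]
    have h1 : ∑ b : B, Real.exp (v b / τ) * (τ⁻¹ * w b)
        = τ⁻¹ * ∑ b : B, Real.exp (v b / τ) * w b := by
      rw [Finset.mul_sum]; exact Finset.sum_congr rfl fun b _ => by ring
    rw [h1]
    field_simp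
    ring
  rw [happ]
  calc |∑ b : B, (Real.exp (v b₀ / τ) * Real.exp (v b / τ)
          / (τ * (∑ c : B, Real.exp (v c / τ)) ^ 2)) * (w b₀ - w b)|
      ≤ ∑ b : B, |(Real.exp (v b₀ / τ) * Real.exp (v b / τ)
          / (τ * (∑ c : B, Real.exp (v c / τ)) ^ 2)) * (w b₀ - w b)| :=
        Finset.abs_sum_le_sum_abs _ _
    _ ≤ ∑ _b : B, (1 / δ) * (2 * ‖w‖) := by
        apply Finset.sum_le_sum
        intro b _
        rcases eq_or_ne b b₀ with rfl | hb
        · simp only [sub_self, mul_zero, abs_zero]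
          positivity
        · rw [abs_mul]
          apply mul_le_mul
          · rw [abs_of_nonneg (by positivity)]
            exact hkey b hb
          · calc |w b₀ - w b| ≤ |w b₀| + |w b| := abs_sub _ _
              _ ≤ ‖w‖ + ‖w‖ := add_le_add (norm_le_pi_norm w b₀) (norm_le_pi_norm w b)
              _ = 2 * ‖w‖ := by ring
          · positivity
          · positivity
    _ = (Fintype.card B) * ((1/δ) * (2 * ‖w‖)) := by
        rw [Finset.sum_const, Finset.card_univ, nsmul_eq_mul]
    _ = 2 * Fintype.card B / δ * ‖w‖ := by ring


/-- uniform Lipschitz-type bound used in Lemma 1: if on a compact set `K`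
every `q ∈ K` has, for each agent, a strict maximizer with gap at least `δ > 0`, then the
gradients of the softmax-weighted losses are uniformly bounded on `K` over small
temperatures: `sup_{τ ∈ (0,1]} sup_{q ∈ K} ‖∇L_τ(q)‖ < ∞`. -/
theorem grad_surrogateLoss_uniformly_bounded {N : ℕ} {A : Fin N → Type*}
    [∀ i, Fintype (A i)] [∀ i, Nonempty (A i)]
    (y : (∀ i, A i) → ℝ)
    (Qtot : (∀ i, A i) → ((Σ i, A i) → ℝ) → ℝ)
    (hQ : ∀ a, ContDiff ℝ 1 (Qtot a))
    (K : Set ((Σ i, A i) → ℝ)) (hK : IsCompact K)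
    (δ : ℝ) (hδ : 0 < δ)
    (hgap : ∀ q ∈ K, ∀ i : Fin N, ∃ gi : A i, ∀ b ≠ gi, q ⟨i, b⟩ + δ ≤ q ⟨i, gi⟩) :
    ∃ C : ℝ, ∀ τ ∈ Set.Ioc (0 : ℝ) 1, ∀ q ∈ K,
      ‖fderiv ℝ
        (fun q' : (Σ i, A i) → ℝ => ∑ a : ∀ i, A i,
          (∏ i, softmax τ (fun b => q' ⟨i, b⟩) (a i)) * (y a - Qtot a q') ^ 2) q‖ ≤ C := by
  --

  classical
  -- uniform bounds on K for the payoff error and the gradient of Qtot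
  have hcont : Continuous (fun q : (Σ i, A i) → ℝ =>
      ∑ a : ∀ i, A i, (|y a - Qtot a q| + ‖fderiv ℝ (Qtot a) q‖)) := by
    apply continuous_finset_sum
    intro a _
    exact ((continuous_const.sub (hQ a).continuous).abs.add
      ((hQ a).continuous_fderiv one_ne_zero).norm)
  obtain ⟨M₀, hM₀⟩ := hK.exists_bound_of_continuousOn hcont.continuousOn
  set M : ℝ := max M₀ 0 with hMdef
  have hM0 : 0 ≤ M := le_max_right _ _
  have hsum_le : ∀ q ∈ K, ∑ a : ∀ i, A i, (|y a - Qtot a q| + ‖fderiv ℝ (Qtot a) q‖) ≤ M := by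
    intro q hq
    calc ∑ a : ∀ i, A i, (|y a - Qtot a q| + ‖fderiv ℝ (Qtot a) q‖)
        ≤ ‖∑ a : ∀ i, A i, (|y a - Qtot a q| + ‖fderiv ℝ (Qtot a) q‖)‖ := le_abs_self _
      _ ≤ M₀ := hM₀ q hq
      _ ≤ M := le_max_left _ _
  have hyQ : ∀ q ∈ K, ∀ a : ∀ i, A i, |y a - Qtot a q| ≤ M := by
    intro q hq a
    calc |y a - Qtot a q| ≤ |y a - Qtot a q| + ‖fderiv ℝ (Qtot a) q‖ :=
          le_add_of_nonneg_right (norm_nonneg _)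
      _ ≤ ∑ a : ∀ i, A i, (|y a - Qtot a q| + ‖fderiv ℝ (Qtot a) q‖) :=
          Finset.single_le_sum (f := fun a => |y a - Qtot a q| + ‖fderiv ℝ (Qtot a) q‖)
            (fun a _ => by positivity) (Finset.mem_univ a)
      _ ≤ M := hsum_le q hq
  have hDQ : ∀ q ∈ K, ∀ a : ∀ i, A i, ‖fderiv ℝ (Qtot a) q‖ ≤ M := by
    intro q hq a
    calc ‖fderiv ℝ (Qtot a) q‖ ≤ |y a - Qtot a q| + ‖fderiv ℝ (Qtot a) q‖ :=
          le_add_of_nonneg_left (abs_nonneg _)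
      _ ≤ ∑ a : ∀ i, A i, (|y a - Qtot a q| + ‖fderiv ℝ (Qtot a) q‖) :=
          Finset.single_le_sum (f := fun a => |y a - Qtot a q| + ‖fderiv ℝ (Qtot a) q‖)
            (fun a _ => by positivity) (Finset.mem_univ a)
      _ ≤ M := hsum_le q hq
  set B₁ : ℝ := ∑ i : Fin N, 2 * (Fintype.card (A i)) / δ with hB₁def
  have hB₁0 : 0 ≤ B₁ := Finset.sum_nonneg fun i _ => by positivity
  refine ⟨(Fintype.card (∀ i, A i)) * (2 * M * M + M ^ 2 * B₁), ?_⟩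
  intro τ hτ q hq
  obtain ⟨hτ0, hτ1⟩ := hτ
  choose g hg using hgap q hq
  -- derivative of each agent's softmax factor
  have hsm : ∀ (i : Fin N) (b₀ : A i), ∃ L : ((Σ j, A j) → ℝ) →L[ℝ] ℝ,
      HasFDerivAt (fun q' : (Σ j, A j) → ℝ => softmax τ (fun b => q' ⟨i, b⟩) b₀) L q ∧
      ‖L‖ ≤ 2 * (Fintype.card (A i)) / δ := by
    intro i b₀
    have h := (softmax_hasFDerivAt' τ (restrCLM (A := A) i q) b₀).comp q
      (restrCLM (A := A) i).hasFDerivAt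
    refine ⟨_, h, ?_⟩
    have hgap' : ∀ b ≠ g i, (restrCLM (A := A) i q) b + δ ≤ (restrCLM (A := A) i q) (g i) :=
      hg i
    calc _ ≤ _ * ‖restrCLM (A := A) i‖ := ContinuousLinearMap.opNorm_comp_le _ _
      _ ≤ (2 * (Fintype.card (A i)) / δ) * 1 :=
        mul_le_mul (softmax_deriv_norm_le hδ hτ0 hτ1 _ (g i) hgap' b₀)
          (restrCLM_norm_le i) (norm_nonneg _) (by positivity)
      _ = 2 * (Fintype.card (A i)) / δ := mul_one _
  choose Lsm hLsm hLsmnorm using hsm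
  -- derivative of the product of softmax factors
  have hprod : ∀ a : ∀ i, A i, ∃ P : ((Σ j, A j) → ℝ) →L[ℝ] ℝ,
      HasFDerivAt (fun q' : (Σ j, A j) → ℝ =>
        ∏ i, softmax τ (fun b => q' ⟨i, b⟩) (a i)) P q ∧ ‖P‖ ≤ B₁ := by
    intro a
    refine ⟨_, HasFDerivAt.finset_prod (u := Finset.univ) (fun i _ => hLsm i (a i)), ?_⟩
    calc ‖∑ i : Fin N, (∏ j ∈ Finset.univ.erase i,
            softmax τ (fun b => q ⟨j, b⟩) (a j)) • Lsm i (a i)‖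
        ≤ ∑ i : Fin N, ‖(∏ j ∈ Finset.univ.erase i,
            softmax τ (fun b => q ⟨j, b⟩) (a j)) • Lsm i (a i)‖ := norm_sum_le _ _
      _ ≤ ∑ i : Fin N, 2 * (Fintype.card (A i)) / δ := by
          apply Finset.sum_le_sum
          intro i _
          apply le_trans (ContinuousLinearMap.opNorm_smul_le _ _)
          have hle1 : ‖∏ j ∈ Finset.univ.erase i,
              softmax τ (fun b => q ⟨j, b⟩) (a j)‖ ≤ 1 := by
            rw [Real.norm_eq_abs,
              abs_of_nonneg (Finset.prod_nonneg fun j _ => softmax_nonneg_s17 _ _)]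
            exact Finset.prod_le_one (fun j _ => softmax_nonneg_s17 _ _)
              (fun j _ => softmax_le_one_s17 _ _)
          calc ‖∏ j ∈ Finset.univ.erase i, softmax τ (fun b => q ⟨j, b⟩) (a j)‖ *
                ‖Lsm i (a i)‖
              ≤ 1 * (2 * (Fintype.card (A i)) / δ) :=
                mul_le_mul hle1 (hLsmnorm i (a i)) (norm_nonneg _) zero_le_one
            _ = 2 * (Fintype.card (A i)) / δ := one_mul _
      _ = B₁ := hB₁def.symm
  -- derivative of each full summand
  have hfa : ∀ a : ∀ i, A i, ∃ D : ((Σ j, A j) → ℝ) →L[ℝ] ℝ,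
      HasFDerivAt (fun q' : (Σ i, A i) → ℝ =>
        (∏ i, softmax τ (fun b => q' ⟨i, b⟩) (a i)) * (y a - Qtot a q') ^ 2) D q ∧
      ‖D‖ ≤ 2 * M * M + M ^ 2 * B₁ := by
    intro a
    obtain ⟨P, hP, hPn⟩ := hprod a
    have h1 : HasFDerivAt (Qtot a) (fderiv ℝ (Qtot a) q) q :=
      ((hQ a).differentiable one_ne_zero q).hasFDerivAt
    have h2 : HasFDerivAt (fun q' => y a - Qtot a q') (-(fderiv ℝ (Qtot a) q)) q :=
      h1.const_sub _
    have hE : HasFDerivAt (fun q' : (Σ i, A i) → ℝ => (y a - Qtot a q') ^ 2)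
        ((((2 : ℕ) : ℝ) * (y a - Qtot a q) ^ (2 - 1)) • (-(fderiv ℝ (Qtot a) q))) q :=
      by have := (hasDerivAt_pow 2 (y a - Qtot a q)).comp_hasFDerivAt q h2; exact this
    have hEn : ‖(((2 : ℕ) : ℝ) * (y a - Qtot a q) ^ (2 - 1)) • (-(fderiv ℝ (Qtot a) q))‖
        ≤ 2 * M * M := by
      rw [norm_smul, norm_neg, Real.norm_eq_abs, abs_mul]
      have h3 : |(y a - Qtot a q) ^ (2 - 1)| ≤ M := by
        simpa using hyQ q hq a
      have h5 := hDQ q hq a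
      have h4 : |((2 : ℕ) : ℝ)| = 2 := by norm_num
      rw [h4]
      nlinarith [norm_nonneg (fderiv ℝ (Qtot a) q),
        abs_nonneg ((y a - Qtot a q) ^ (2 - 1))]
    refine ⟨_, hP.mul hE, ?_⟩
    have hPq1 : |∏ i, softmax τ (fun b => q ⟨i, b⟩) (a i)| ≤ 1 := by
      rw [abs_of_nonneg (Finset.prod_nonneg fun j _ => softmax_nonneg_s17 _ _)]
      exact Finset.prod_le_one (fun j _ => softmax_nonneg_s17 _ _)
        (fun j _ => softmax_le_one_s17 _ _)
    have hEq : |(y a - Qtot a q) ^ 2| ≤ M ^ 2 := by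
      rw [abs_pow]
      exact pow_le_pow_left₀ (abs_nonneg _) (hyQ q hq a) 2
    calc ‖(∏ i, softmax τ (fun b => q ⟨i, b⟩) (a i)) •
            ((((2 : ℕ) : ℝ) * (y a - Qtot a q) ^ (2 - 1)) • (-(fderiv ℝ (Qtot a) q)))
          + ((y a - Qtot a q) ^ 2) • P‖
        ≤ ‖(∏ i, softmax τ (fun b => q ⟨i, b⟩) (a i)) •
            ((((2 : ℕ) : ℝ) * (y a - Qtot a q) ^ (2 - 1)) • (-(fderiv ℝ (Qtot a) q)))‖
          + ‖((y a - Qtot a q) ^ 2) • P‖ := norm_add_le _ _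
      _ ≤ 1 * (2 * M * M) + M ^ 2 * B₁ := by
          apply add_le_add
          · apply le_trans (ContinuousLinearMap.opNorm_smul_le _ _)
            rw [Real.norm_eq_abs]
            exact mul_le_mul hPq1 hEn (norm_nonneg _) zero_le_one
          · apply le_trans (ContinuousLinearMap.opNorm_smul_le _ _)
            rw [Real.norm_eq_abs]
            exact mul_le_mul hEq hPn (norm_nonneg _) (by positivity)
      _ = 2 * M * M + M ^ 2 * B₁ := by ring
  choose D hD hDn using hfa
  have htot : HasFDerivAt
      (fun q' : (Σ i, A i) → ℝ => ∑ a : ∀ i, A i,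
        (∏ i, softmax τ (fun b => q' ⟨i, b⟩) (a i)) * (y a - Qtot a q') ^ 2)
      (∑ a : ∀ i, A i, D a) q := HasFDerivAt.fun_sum (fun a _ => hD a)
  rw [htot.fderiv]
  calc ‖∑ a : ∀ i, A i, D a‖ ≤ ∑ a : ∀ i, A i, ‖D a‖ := norm_sum_le _ _
    _ ≤ ∑ _a : ∀ i, A i, (2 * M * M + M ^ 2 * B₁) := Finset.sum_le_sum fun a _ => hDn a
    _ = (Fintype.card (∀ i, A i)) * (2 * M * M + M ^ 2 * B₁) := by
        rw [Finset.sum_const, Finset.card_univ, nsmul_eq_mul]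
end
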